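/- Fix an integer x_max ≥ 1 and probability distributions μ₁,…,μ_{x_max} on [0,∞), each with finite mean m(1),…,m(x_max). For each n, let the couplings J_X, X ⊆ {1,…,n}, be independent, with J_X ~ μ_{|X|} when 1 ≤ |X| ≤ x_max and J_X = 0 when |X| > x_max. Assume there is a constant C > 0 such that n⁻¹ Σ_{j=1}^{x_max} C(n,j) m(j) ≤ C for all n, where C(n,j) is the binomial coefficient. Assume furthermore that for each instance of the couplings the Gibbs averages of all spin products are nonnegative: for any nonnegative couplings, ⟨σ_X⟩ ≥ 0 for every X (first GKS inequality). Then the sequence of average pressures p_n = E[n⁻¹ ln Σ_{σ∈{±1}ⁿ} exp(Σ_X J_X σ_X)] converges as n → ∞ to a finite limit, which equals sup_n p_n and is at most C + ln 2. -/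

import Mathlib

open MeasureTheory ProbabilityTheory Finset

noncomputable section

/-- The real value of a Boolean spin: `true ↦ 1`, `false ↦ -1`. -/
def spinVal (b : Bool) : ℝ := if b then 1 else -1

/-- The product of spins over a subset `X ⊆ {1,…,n}`. -/
def spinProd {n : ℕ} (X : Finset (Fin n)) (σ : Fin n → Bool) : ℝ :=
  ∏ i ∈ X, spinVal (σ i)

/-- The perturbed Hamiltonian
`H(σ) = -∑_X J_X σ_X - h₀ ∑ᵢ σᵢ - h₁ ∑ᵢ τᵢ σᵢ`. -/
def Ham (n : ℕ) (J : Finset (Fin n) → ℝ) (h₀ h₁ : ℝ) (τ : Fin n → ℕ)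
    (σ : Fin n → Bool) : ℝ :=
  -(∑ X : Finset (Fin n), J X * spinProd X σ)
    - h₀ * ∑ i, spinVal (σ i) - h₁ * ∑ i, (τ i : ℝ) * spinVal (σ i)

/-- The partition function `Z = ∑_σ e^{-H(σ)}`. -/
def Zp (n : ℕ) (H : (Fin n → Bool) → ℝ) : ℝ :=
  ∑ σ : Fin n → Bool, Real.exp (-(H σ))

/-- The Gibbs average `⟨f⟩ = Z⁻¹ ∑_σ f(σ) e^{-H(σ)}`. -/
def gibbs (n : ℕ) (H : (Fin n → Bool) → ℝ) (f : (Fin n → Bool) → ℝ) : ℝ :=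
  (∑ σ : Fin n → Bool, f σ * Real.exp (-(H σ))) / Zp n H

/-- The replicated Gibbs average of a function of `k` i.i.d. replicas. -/
def gibbsRep (n k : ℕ) (H : (Fin n → Bool) → ℝ)
    (f : (Fin k → Fin n → Bool) → ℝ) : ℝ :=
  (∑ σs : Fin k → Fin n → Bool, f σs * ∏ a, Real.exp (-(H (σs a)))) / (Zp n H) ^ k

/-- The multi-overlap `Q_k = n⁻¹ ∑ᵢ σᵢ⁽¹⁾⋯σᵢ⁽ᵏ⁾` of `k` replicas. -/
def QkRep (n k : ℕ) (σs : Fin k → Fin n → Bool) : ℝ :=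
  (n : ℝ)⁻¹ * ∑ i, ∏ a, spinVal (σs a i)

/-- The local magnetization `⟨σᵢ⟩`. -/
def magg (n : ℕ) (H : (Fin n → Bool) → ℝ) (i : Fin n) : ℝ :=
  gibbs n H fun σ => spinVal (σ i)

/-- The two-point function `⟨σᵢσⱼ⟩`. -/
def corrr (n : ℕ) (H : (Fin n → Bool) → ℝ) (i j : Fin n) : ℝ :=
  gibbs n H fun σ => spinVal (σ i) * spinVal (σ j)

/-- `⟨Q_k⟩ = n⁻¹ ∑ᵢ ⟨σᵢ⟩ᵏ`, the Gibbs average of the multi-overlap. -/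
def avgQ (n k : ℕ) (H : (Fin n → Bool) → ℝ) : ℝ :=
  gibbsRep n k H (QkRep n k)

/-- The product of `n` i.i.d. Poisson(`r`) distributions on `ℕⁿ`. -/
def ppi (n : ℕ) (r : ℝ) : Measure (Fin n → ℕ) :=
  Measure.pi fun _ : Fin n => poissonMeasure (Real.toNNReal r)

end

-- basic lemmas
lemma abs_spinVal (b : Bool) : |spinVal b| = 1 := by cases b <;> simp [spinVal]

lemma abs_spinProd {n : ℕ} (X : Finset (Fin n)) (σ : Fin n → Bool) : |spinProd X σ| = 1 := by
  rw [spinProd, Finset.abs_prod]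
  simp [abs_spinVal]

lemma spinProd_true {n : ℕ} (X : Finset (Fin n)) : spinProd X (fun _ => true) = 1 := by
  simp [spinProd, spinVal]

lemma neg_Ham (n : ℕ) (J : Finset (Fin n) → ℝ) (σ : Fin n → Bool) :
    -(Ham n J 0 0 (fun _ => 0) σ) = ∑ X : Finset (Fin n), J X * spinProd X σ := by
  simp [Ham]

lemma Zp_pos (n : ℕ) (H : (Fin n → Bool) → ℝ) : 0 < Zp n H :=
  Finset.sum_pos (fun σ _ => Real.exp_pos _) ⟨fun _ => true, Finset.mem_univ _⟩

lemma S_le (n : ℕ) (J : Finset (Fin n) → ℝ) (σ : Fin n → Bool) :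
    |∑ X : Finset (Fin n), J X * spinProd X σ| ≤ ∑ X : Finset (Fin n), |J X| := by
  refine (Finset.abs_sum_le_sum_abs _ _).trans (Finset.sum_le_sum fun X _ => ?_)
  rw [abs_mul, abs_spinProd, mul_one]

lemma logZ_le (n : ℕ) (J : Finset (Fin n) → ℝ) :
    Real.log (Zp n (Ham n J 0 0 fun _ => 0)) ≤ n * Real.log 2 + ∑ X : Finset (Fin n), |J X| := by
  have h1 : Zp n (Ham n J 0 0 fun _ => 0) ≤ (2:ℝ)^n * Real.exp (∑ X : Finset (Fin n), |J X|) := by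
    rw [Zp]
    calc ∑ σ : Fin n → Bool, Real.exp (-(Ham n J 0 0 (fun _ => 0) σ))
        ≤ ∑ _σ : Fin n → Bool, Real.exp (∑ X : Finset (Fin n), |J X|) := by
          refine Finset.sum_le_sum fun σ _ => Real.exp_le_exp.2 ?_
          rw [neg_Ham]
          exact (le_abs_self _).trans (S_le n J σ)
      _ = (2:ℝ)^n * Real.exp (∑ X : Finset (Fin n), |J X|) := by
          rw [Finset.sum_const, Finset.card_univ, Fintype.card_fun, Fintype.card_bool,
            Fintype.card_fin, nsmul_eq_mul]
          push_cast
          ring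
  calc Real.log (Zp n (Ham n J 0 0 fun _ => 0)) ≤ Real.log ((2:ℝ)^n * Real.exp (∑ X : Finset (Fin n), |J X|)) :=
        Real.log_le_log (Zp_pos _ _) h1
    _ = n * Real.log 2 + ∑ X : Finset (Fin n), |J X| := by
        rw [Real.log_mul (by positivity) (Real.exp_ne_zero _), Real.log_pow, Real.log_exp]

lemma neg_le_logZ (n : ℕ) (J : Finset (Fin n) → ℝ) :
    -(∑ X : Finset (Fin n), |J X|) ≤ Real.log (Zp n (Ham n J 0 0 fun _ => 0)) := by
  have h2 : Real.exp (-(∑ X : Finset (Fin n), |J X|)) ≤ Zp n (Ham n J 0 0 fun _ => 0) := by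
    rw [Zp]
    refine (Finset.single_le_sum (f := fun σ : Fin n → Bool => Real.exp (-(Ham n J 0 0 (fun _ => 0) σ)))
      (fun σ _ => (Real.exp_pos _).le) (Finset.mem_univ (fun _ => true))).trans' ?_
    refine Real.exp_le_exp.2 ?_
    rw [neg_Ham]
    exact neg_le_of_abs_le (S_le n J _)
  calc -(∑ X : Finset (Fin n), |J X|) = Real.log (Real.exp (-(∑ X : Finset (Fin n), |J X|))) := (Real.log_exp _).symm
    _ ≤ _ := Real.log_le_log (Real.exp_pos _) h2

lemma abs_logZ_le (n : ℕ) (J : Finset (Fin n) → ℝ) :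
    |Real.log (Zp n (Ham n J 0 0 fun _ => 0))| ≤ n * Real.log 2 + ∑ X : Finset (Fin n), |J X| := by
  rw [abs_le]
  constructor
  · refine le_trans ?_ (neg_le_logZ n J)
    have : (0:ℝ) ≤ n * Real.log 2 := by positivity
    linarith
  · exact logZ_le n J

lemma logZ_nonneg (n : ℕ) (J : Finset (Fin n) → ℝ) (hJ : ∀ X, 0 ≤ J X) :
    0 ≤ Real.log (Zp n (Ham n J 0 0 fun _ => 0)) := by
  refine Real.log_nonneg ?_
  have : Real.exp (-(Ham n J 0 0 (fun _ => 0) (fun _ => true))) ≤ Zp n (Ham n J 0 0 fun _ => 0) :=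
    Finset.single_le_sum (f := fun σ : Fin n → Bool => Real.exp (-(Ham n J 0 0 (fun _ => 0) σ)))
      (fun σ _ => (Real.exp_pos _).le) (Finset.mem_univ _)
  refine le_trans ?_ this
  rw [← Real.exp_zero, Real.exp_le_exp, neg_Ham]
  exact Finset.sum_nonneg fun X _ => by rw [spinProd_true, mul_one]; exact hJ X

lemma continuous_logZ (n : ℕ) :
    Continuous fun J : Finset (Fin n) → ℝ => Real.log (Zp n (Ham n J 0 0 fun _ => 0)) := by
  have hz : Continuous fun J : Finset (Fin n) → ℝ => Zp n (Ham n J 0 0 fun _ => 0) := by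
    simp only [Zp, neg_Ham]
    exact continuous_finset_sum _ fun σ _ =>
      (continuous_finset_sum _ fun X _ => (continuous_apply X).mul continuous_const).rexp
  exact hz.log fun J => (Zp_pos _ _).ne'

-- GKS monotonicity
lemma logZ_update_zero_le (n : ℕ)
    (hGKS : ∀ (J : Finset (Fin n) → ℝ), (∀ X, 0 ≤ J X) →
      ∀ X : Finset (Fin n), 0 ≤ gibbs n (Ham n J 0 0 fun _ => 0) (spinProd X))
    (J : Finset (Fin n) → ℝ) (hJ : ∀ X, 0 ≤ J X) (X₀ : Finset (Fin n)) :
    Real.log (Zp n (Ham n (Function.update J X₀ 0) 0 0 fun _ => 0)) ≤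
      Real.log (Zp n (Ham n J 0 0 fun _ => 0)) := by
  classical
  set s : (Fin n → Bool) → ℝ := fun σ => spinProd X₀ σ with hs
  set c : (Fin n → Bool) → ℝ := fun σ => ∑ X ∈ Finset.univ.erase X₀, J X * spinProd X σ with hc
  have hsum : ∀ (t : ℝ) (σ : Fin n → Bool),
      (∑ X : Finset (Fin n), Function.update J X₀ t X * spinProd X σ) = c σ + t * s σ := by
    intro t σ
    rw [← Finset.add_sum_erase _ (fun X => Function.update J X₀ t X * spinProd X σ)
      (Finset.mem_univ X₀)]
    rw [Function.update_self, add_comm]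
    congr 1
    refine Finset.sum_congr rfl fun X hX => ?_
    rw [Function.update_of_ne (Finset.ne_of_mem_erase hX)]
  set φ : ℝ → ℝ := fun t =>
    Real.log (Zp n (Ham n (Function.update J X₀ t) 0 0 fun _ => 0)) with hφ
  have hZ : ∀ t : ℝ, Zp n (Ham n (Function.update J X₀ t) 0 0 fun _ => 0) =
      ∑ σ : Fin n → Bool, Real.exp (c σ + t * s σ) := by
    intro t
    rw [Zp]
    exact Finset.sum_congr rfl fun σ _ => by rw [neg_Ham, hsum]
  have hD : ∀ t : ℝ, HasDerivAt (fun t => ∑ σ : Fin n → Bool, Real.exp (c σ + t * s σ))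
      (∑ σ : Fin n → Bool, s σ * Real.exp (c σ + t * s σ)) t := by
    intro t
    refine HasDerivAt.fun_sum fun σ _ => ?_
    have h1 : HasDerivAt (fun t : ℝ => c σ + t * s σ) (s σ) t := by
      simpa using ((hasDerivAt_id t).mul_const (s σ)).const_add (c σ)
    simpa [mul_comm] using h1.exp
  have hZpos : ∀ t : ℝ, 0 < ∑ σ : Fin n → Bool, Real.exp (c σ + t * s σ) := by
    intro t
    exact Finset.sum_pos (fun σ _ => Real.exp_pos _) ⟨fun _ => true, Finset.mem_univ _⟩
  have hderiv : ∀ t : ℝ, HasDerivAt φ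
      ((∑ σ : Fin n → Bool, s σ * Real.exp (c σ + t * s σ)) /
        (∑ σ : Fin n → Bool, Real.exp (c σ + t * s σ))) t := by
    intro t
    have := ((hD t).log (hZpos t).ne')
    refine this.congr_of_eventuallyEq ?_
    filter_upwards with u
    show Real.log (Zp n (Ham n (Function.update J X₀ u) 0 0 fun _ => 0)) = _
    rw [hZ]
  have hmono : MonotoneOn φ (Set.Ici (0:ℝ)) := by
    refine monotoneOn_of_deriv_nonneg (convex_Ici 0) ?_ ?_ ?_
    · exact ContinuousOn.mono (Continuous.continuousOn
        (continuous_iff_continuousAt.2 fun x => (hderiv x).continuousAt)) (Set.subset_univ _)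
    · intro t _
      exact (hderiv t).differentiableAt.differentiableWithinAt
    · intro t ht
      rw [interior_Ici] at ht
      rw [(hderiv t).deriv]
      have hnn : ∀ X, 0 ≤ Function.update J X₀ t X := by
        intro X
        rcases eq_or_ne X X₀ with rfl | h
        · rw [Function.update_self]; exact le_of_lt ht
        · rw [Function.update_of_ne h]; exact hJ X
      have := hGKS (Function.update J X₀ t) hnn X₀
      rw [gibbs] at this
      convert this using 2
      · exact Finset.sum_congr rfl fun σ _ => by rw [neg_Ham, hsum, mul_comm]
      · rw [Zp]
        exact (Finset.sum_congr rfl fun σ _ => by rw [neg_Ham, hsum]).symm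
  have h0 : φ 0 ≤ φ (J X₀) :=
    hmono (Set.mem_Ici.2 le_rfl) (Set.mem_Ici.2 (hJ X₀)) (hJ X₀)
  rw [hφ] at h0
  simpa [Function.update_eq_self] using h0

lemma logZ_zero_set_le (n : ℕ)
    (hGKS : ∀ (J : Finset (Fin n) → ℝ), (∀ X, 0 ≤ J X) →
      ∀ X : Finset (Fin n), 0 ≤ gibbs n (Ham n J 0 0 fun _ => 0) (spinProd X))
    (J : Finset (Fin n) → ℝ) (hJ : ∀ X, 0 ≤ J X) (S : Finset (Finset (Fin n))) :
    Real.log (Zp n (Ham n (fun X => if X ∈ S then 0 else J X) 0 0 fun _ => 0)) ≤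
      Real.log (Zp n (Ham n J 0 0 fun _ => 0)) := by
  classical
  induction S using Finset.induction_on with
  | empty => simp
  | @insert X₀ S hX₀ ih =>
    have hupd : (fun X => if X ∈ insert X₀ S then 0 else J X) =
        Function.update (fun X => if X ∈ S then 0 else J X) X₀ 0 := by
      funext X
      rcases eq_or_ne X X₀ with rfl | h
      · simp [Function.update_self]
      · rw [Function.update_of_ne h]
        simp [Finset.mem_insert, h]
    rw [hupd]
    refine le_trans (logZ_update_zero_le n hGKS _ (fun X => ?_) X₀) ih
    split
    · exact le_rfl
    · exact hJ X

-- factorization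
def pairEquiv (n m : ℕ) : (Fin n → Bool) × (Fin m → Bool) ≃ (Fin (n+m) → Bool) :=
  (Equiv.sumArrowEquivProdArrow (Fin n) (Fin m) Bool).symm.trans
    (Equiv.arrowCongr finSumFinEquiv (Equiv.refl Bool))

lemma pairEquiv_castAdd (n m : ℕ) (p : (Fin n → Bool) × (Fin m → Bool)) (i : Fin n) :
    pairEquiv n m p (Fin.castAddEmb m i) = p.1 i := by
  have h : pairEquiv n m p (Fin.castAddEmb m i)
      = Sum.elim p.1 p.2 (finSumFinEquiv.symm (Fin.castAdd m i)) := rfl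
  rw [h, finSumFinEquiv_symm_apply_castAdd]
  rfl

lemma pairEquiv_natAdd (n m : ℕ) (p : (Fin n → Bool) × (Fin m → Bool)) (i : Fin m) :
    pairEquiv n m p (Fin.natAddEmb n i) = p.2 i := by
  have h : pairEquiv n m p (Fin.natAddEmb n i)
      = Sum.elim p.1 p.2 (finSumFinEquiv.symm (Fin.natAdd n i)) := rfl
  rw [h, finSumFinEquiv_symm_apply_natAdd]
  rfl

lemma spinProd_mapL (n m : ℕ) (Y : Finset (Fin n)) (p : (Fin n → Bool) × (Fin m → Bool)) :
    spinProd (Y.map (Fin.castAddEmb m)) (pairEquiv n m p) = spinProd Y p.1 := by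
  rw [spinProd, Finset.prod_map, spinProd]
  exact Finset.prod_congr rfl fun i _ => by rw [pairEquiv_castAdd]

lemma spinProd_mapR (n m : ℕ) (Y : Finset (Fin m)) (p : (Fin n → Bool) × (Fin m → Bool)) :
    spinProd (Y.map (Fin.natAddEmb n)) (pairEquiv n m p) = spinProd Y p.2 := by
  rw [spinProd, Finset.prod_map, spinProd]
  exact Finset.prod_congr rfl fun i _ => by rw [pairEquiv_natAdd]

lemma notLR (n m : ℕ) (i : Fin (n+m)) (hL : i ∈ Finset.univ.map (Fin.castAddEmb m))
    (hR : i ∈ Finset.univ.map (Fin.natAddEmb n)) : False := by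
  rcases Finset.mem_map.1 hL with ⟨a, -, rfl⟩
  rcases Finset.mem_map.1 hR with ⟨b, -, hb⟩
  have h1 : ((Fin.castAddEmb m a : Fin (n+m)) : ℕ) = a := rfl
  have h2 : ((Fin.natAddEmb n b : Fin (n+m)) : ℕ) = n + b := rfl
  have := a.isLt
  omega

lemma sum_decomp (n m : ℕ) (J : Finset (Fin (n+m)) → ℝ) (h₀ : J ∅ = 0)
    (hsupp : ∀ X : Finset (Fin (n+m)),
      ¬(X ⊆ Finset.univ.map (Fin.castAddEmb m) ∨ X ⊆ Finset.univ.map (Fin.natAddEmb n)) → J X = 0)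
    (p : (Fin n → Bool) × (Fin m → Bool)) :
    ∑ X : Finset (Fin (n+m)), J X * spinProd X (pairEquiv n m p) =
      (∑ Y : Finset (Fin n), J (Y.map (Fin.castAddEmb m)) * spinProd Y p.1)
      + ∑ Y : Finset (Fin m), J (Y.map (Fin.natAddEmb n)) * spinProd Y p.2 := by
  classical
  set L := Finset.univ.map (Fin.castAddEmb m) with hLdef
  set R := Finset.univ.map (Fin.natAddEmb n) with hRdef
  set f : Finset (Fin (n+m)) → ℝ := fun X => J X * spinProd X (pairEquiv n m p) with hf
  set A : Finset (Finset (Fin (n+m))) := Finset.univ.filter (fun X => X ⊆ L) with hA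
  set B : Finset (Finset (Fin (n+m))) :=
    Finset.univ.filter (fun X => X ⊆ R ∧ ¬ X ⊆ L) with hB
  have hAB : Disjoint A B := by
    rw [Finset.disjoint_left]
    intro X hXA hXB
    rw [hA, Finset.mem_filter] at hXA
    rw [hB, Finset.mem_filter] at hXB
    exact hXB.2.2 hXA.2
  have hsplit : ∑ X : Finset (Fin (n+m)), f X = ∑ X ∈ A ∪ B, f X := by
    refine (Finset.sum_subset (Finset.subset_univ _) fun X _ hX => ?_).symm
    rw [Finset.mem_union, hA, hB, Finset.mem_filter, Finset.mem_filter] at hX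
    push_neg at hX
    have h1 := hX.1 (Finset.mem_univ X)
    have h2 := hX.2 (Finset.mem_univ X)
    have : J X = 0 := hsupp X (by tauto)
    simp only [hf, this, zero_mul]
  have hAeq : A = Finset.univ.image (fun Y : Finset (Fin n) => Y.map (Fin.castAddEmb m)) := by
    ext X
    rw [hA, Finset.mem_filter, Finset.mem_image]
    constructor
    · rintro ⟨-, hXL⟩
      rcases Finset.subset_map_iff.1 hXL with ⟨u, -, rfl⟩
      exact ⟨u, Finset.mem_univ u, rfl⟩
    · rintro ⟨Y, -, rfl⟩
      exact ⟨Finset.mem_univ _, Finset.map_subset_map.2 (Finset.subset_univ Y)⟩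
  have hBeq : B = (Finset.univ.erase ∅).image
      (fun Y : Finset (Fin m) => Y.map (Fin.natAddEmb n)) := by
    ext X
    rw [hB, Finset.mem_filter, Finset.mem_image]
    constructor
    · rintro ⟨-, hXR, hXL⟩
      rcases Finset.subset_map_iff.1 hXR with ⟨u, -, rfl⟩
      refine ⟨u, Finset.mem_erase.2 ⟨?_, Finset.mem_univ u⟩, rfl⟩
      rintro rfl
      exact hXL (by simp)
    · rintro ⟨Y, hY, rfl⟩
      have hYne : Y ≠ ∅ := (Finset.mem_erase.1 hY).1
      refine ⟨Finset.mem_univ _, Finset.map_subset_map.2 (Finset.subset_univ Y), fun hsub => ?_⟩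
      rcases Finset.nonempty_iff_ne_empty.2 hYne with ⟨i, hi⟩
      have hiR : Fin.natAddEmb n i ∈ R := by
        rw [hRdef]; exact Finset.mem_map_of_mem _ (Finset.mem_univ i)
      have hiL : Fin.natAddEmb n i ∈ L := hsub (Finset.mem_map_of_mem _ hi)
      exact notLR n m _ hiL hiR
  have hsumA : ∑ X ∈ A, f X =
      ∑ Y : Finset (Fin n), J (Y.map (Fin.castAddEmb m)) * spinProd Y p.1 := by
    rw [hAeq, Finset.sum_image (fun x _ y _ h => Finset.map_injective _ h)]
    exact Finset.sum_congr rfl fun Y _ => by simp only [hf]; rw [spinProd_mapL]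
  have hsumB : ∑ X ∈ B, f X =
      ∑ Y : Finset (Fin m), J (Y.map (Fin.natAddEmb n)) * spinProd Y p.2 := by
    rw [hBeq, Finset.sum_image (fun x _ y _ h => Finset.map_injective _ h)]
    have : ∑ Y ∈ Finset.univ.erase (∅ : Finset (Fin m)), f (Y.map (Fin.natAddEmb n)) =
        ∑ Y : Finset (Fin m), f (Y.map (Fin.natAddEmb n)) := by
      refine Finset.sum_erase _ ?_
      simp only [hf, Finset.map_empty, h₀, zero_mul]
    rw [this]
    exact Finset.sum_congr rfl fun Y _ => by simp only [hf]; rw [spinProd_mapR]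
  rw [hsplit, Finset.sum_union hAB, hsumA, hsumB]

lemma Zp_factor (n m : ℕ) (J : Finset (Fin (n+m)) → ℝ) (h₀ : J ∅ = 0)
    (hsupp : ∀ X : Finset (Fin (n+m)),
      ¬(X ⊆ Finset.univ.map (Fin.castAddEmb m) ∨ X ⊆ Finset.univ.map (Fin.natAddEmb n)) → J X = 0) :
    Zp (n+m) (Ham (n+m) J 0 0 fun _ => 0) =
      Zp n (Ham n (fun Y => J (Y.map (Fin.castAddEmb m))) 0 0 fun _ => 0) *
      Zp m (Ham m (fun Y => J (Y.map (Fin.natAddEmb n))) 0 0 fun _ => 0) := by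
  rw [Zp, Zp, Zp, Finset.sum_mul_sum]
  rw [← Equiv.sum_comp (pairEquiv n m)
    (fun σ => Real.exp (-(Ham (n+m) J 0 0 (fun _ => 0) σ)))]
  rw [Fintype.sum_prod_type]
  refine Finset.sum_congr rfl fun σ₁ _ => Finset.sum_congr rfl fun σ₂ _ => ?_
  rw [neg_Ham, sum_decomp n m J h₀ hsupp (σ₁, σ₂), Real.exp_add, neg_Ham, neg_Ham]

-- measure preserving restriction
lemma measurePreserving_restrict {ι κ : Type*} [Fintype ι] [Fintype κ]
    (μ : ι → Measure ℝ) [∀ i, IsProbabilityMeasure (μ i)]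
    (g : κ → ι) (hg : Function.Injective g) :
    MeasurePreserving (fun (J : ι → ℝ) (k : κ) => J (g k))
      (Measure.pi μ) (Measure.pi fun k => μ (g k)) := by
  classical
  set p : ι → Prop := fun i => i ∈ Set.range g with hp
  letI F1 : Fintype (Subtype p) := Subtype.fintype p
  letI F2 : Fintype {i // ¬ p i} := Subtype.fintype _
  have e1 := measurePreserving_piEquivPiSubtypeProd (α := fun _ : ι => ℝ) μ p
  have hfst : MeasurePreserving (Prod.fst :
        ((∀ i : Subtype p, ℝ) × (∀ i : {i // ¬ p i}, ℝ)) → (∀ i : Subtype p, ℝ))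
      ((Measure.pi fun i : Subtype p => μ i).prod (Measure.pi fun i : {i // ¬ p i} => μ i))
      (Measure.pi fun i : Subtype p => μ i) := by
    constructor
    · exact measurable_fst
    · rw [Measure.map_fst_prod]
      simp
  set ε : κ ≃ Subtype p := Equiv.ofInjective g hg with hε
  have e3 : MeasurePreserving
      ((MeasurableEquiv.piCongrLeft (fun _ : Subtype p => ℝ) ε).symm)
      (Measure.pi fun i : Subtype p => μ i) (Measure.pi fun k : κ => μ (ε k)) :=
    ((measurePreserving_piCongrLeft (fun i : Subtype p => μ i) ε)).symm _
  have hcomp := e3.comp (hfst.comp (show MeasurePreserving _ (Measure.pi μ) _ by exact e1))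
  have hfun : ((MeasurableEquiv.piCongrLeft (fun _ : Subtype p => ℝ) ε).symm ∘
      Prod.fst ∘ (MeasurableEquiv.piEquivPiSubtypeProd (fun _ : ι => ℝ) p)) =
      fun (J : ι → ℝ) (k : κ) => J (g k) := by
    funext J
    ext k
    rfl
  rw [hfun] at hcomp
  exact hcomp

lemma measurePreserving_evalR {ι : Type*} [Fintype ι]
    (μ : ι → Measure ℝ) [∀ i, IsProbabilityMeasure (μ i)] (i : ι) :
    MeasurePreserving (fun J : ι → ℝ => J i) (Measure.pi μ) (μ i) := by
  have h1 := measurePreserving_restrict μ (fun _ : Unit => i) (fun a b _ => rfl)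
  have h2 := measurePreserving_funUnique (μ i) Unit
  exact h2.comp h1

lemma integral_evalR {ι : Type*} [Fintype ι]
    (μ : ι → Measure ℝ) [∀ i, IsProbabilityMeasure (μ i)] (i : ι) (f : ℝ → ℝ)
    (hf : AEStronglyMeasurable f (μ i)) :
    ∫ J : ι → ℝ, f (J i) ∂(Measure.pi μ) = ∫ x, f x ∂(μ i) := by
  have h := (measurePreserving_evalR μ i).map_eq
  rw [← h] at hf
  rw [← h, integral_map (measurable_pi_apply i).aemeasurable hf]

lemma integrable_evalR {ι : Type*} [Fintype ι]
    (μ : ι → Measure ℝ) [∀ i, IsProbabilityMeasure (μ i)] (i : ι) (f : ℝ → ℝ)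
    (hf : AEStronglyMeasurable f (μ i)) (hint : Integrable f (μ i)) :
    Integrable (fun J : ι → ℝ => f (J i)) (Measure.pi μ) :=
  ((measurePreserving_evalR μ i).integrable_comp hf).2 hint

section nu
variable (ν : ℕ → Measure ℝ) [∀ j, IsProbabilityMeasure (ν j)]

lemma integrable_logZnu (n : ℕ) (hmean : ∀ j, Integrable id (ν j)) :
    Integrable (fun J : Finset (Fin n) → ℝ => Real.log (Zp n (Ham n J 0 0 fun _ => 0)))
      (Measure.pi fun X : Finset (Fin n) => ν X.card) := by
  refine Integrable.mono'
    (g := fun J : Finset (Fin n) → ℝ => n * Real.log 2 + ∑ X : Finset (Fin n), |J X|)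
    ?_ ((continuous_logZ n).aestronglyMeasurable) ?_
  · refine (integrable_const _).add ?_
    refine integrable_finset_sum _ fun X _ => ?_
    exact integrable_evalR _ X (fun x => |x|) continuous_abs.aestronglyMeasurable
      (hmean X.card).abs
  · filter_upwards with J
    rw [Real.norm_eq_abs]
    exact abs_logZ_le n J

lemma ae_nonneg_nu (n : ℕ) (hsupp : ∀ j, ν j (Set.Iio 0) = 0) :
    ∀ᵐ J : Finset (Fin n) → ℝ ∂(Measure.pi fun X : Finset (Fin n) => ν X.card),
      ∀ X, 0 ≤ J X := by
  rw [MeasureTheory.ae_all_iff]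
  intro X
  rw [ae_iff]
  have hset : {J : Finset (Fin n) → ℝ | ¬ 0 ≤ J X} =
      (Function.eval X) ⁻¹' (Set.Iio 0) := by
    ext J; simp [not_le, Function.eval]
  rw [hset]
  exact Measure.pi_eval_preimage_null _ (hsupp X.card)

lemma ae_empty_nu (n : ℕ) (hν₀ : ν 0 = Measure.dirac 0) :
    ∀ᵐ J : Finset (Fin n) → ℝ ∂(Measure.pi fun X : Finset (Fin n) => ν X.card),
      J ∅ = 0 := by
  rw [ae_iff]
  have hset : {J : Finset (Fin n) → ℝ | ¬ J ∅ = 0} =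
      (Function.eval (∅ : Finset (Fin n))) ⁻¹' (({(0:ℝ)} : Set ℝ)ᶜ) := by
    ext J; simp [Function.eval]
  rw [hset]
  refine Measure.pi_eval_preimage_null _ ?_
  rw [show (∅ : Finset (Fin n)).card = 0 from rfl, hν₀,
    Measure.dirac_apply' _ (measurableSet_singleton (0:ℝ)).compl]
  simp

lemma integral_absJ (n : ℕ) (X : Finset (Fin n)) (hsupp : ∀ j, ν j (Set.Iio 0) = 0) :
    ∫ J : Finset (Fin n) → ℝ, |J X| ∂(Measure.pi fun X : Finset (Fin n) => ν X.card) =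
      ∫ x, x ∂(ν X.card) := by
  rw [integral_evalR _ X (fun x => |x|) continuous_abs.aestronglyMeasurable]
  refine integral_congr_ae ?_
  have : ∀ᵐ x ∂(ν X.card), 0 ≤ x := by
    rw [ae_iff]
    have : {x : ℝ | ¬ 0 ≤ x} = Set.Iio 0 := by ext x; simp [not_le]
    rw [this]; exact hsupp _
  filter_upwards [this] with x hx
  exact abs_of_nonneg hx

lemma mean_nonneg_nu (j : ℕ) (hsupp : ∀ j, ν j (Set.Iio 0) = 0) : 0 ≤ ∫ x, x ∂(ν j) := by
  refine integral_nonneg_of_ae ?_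
  have h : ∀ᵐ x ∂(ν j), 0 ≤ x := by
    rw [ae_iff]
    have : {x : ℝ | ¬ 0 ≤ x} = Set.Iio 0 := by ext x; simp [not_le]
    rw [this]; exact hsupp _
  exact h

end nu

lemma integral_mp {α β : Type*} [MeasurableSpace α] [MeasurableSpace β]
    {μ : Measure α} {ν' : Measure β} {f : α → β} (h : MeasurePreserving f μ ν')
    (g : β → ℝ) (hg : AEStronglyMeasurable g ν') :
    ∫ x, g (f x) ∂μ = ∫ y, g y ∂ν' := by
  rw [← h.map_eq] at hg ⊢
  rw [integral_map h.measurable.aemeasurable hg]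

section nu2
variable (ν : ℕ → Measure ℝ) [∀ j, IsProbabilityMeasure (ν j)]

lemma mp_restL (n m : ℕ) :
    MeasurePreserving
      (fun (J : Finset (Fin (n+m)) → ℝ) (Y : Finset (Fin n)) => J (Y.map (Fin.castAddEmb m)))
      (Measure.pi fun X : Finset (Fin (n+m)) => ν X.card)
      (Measure.pi fun Y : Finset (Fin n) => ν Y.card) := by
  have h := measurePreserving_restrict (fun X : Finset (Fin (n+m)) => ν X.card)
    (fun Y : Finset (Fin n) => Y.map (Fin.castAddEmb m))
    (fun a b hab => Finset.map_injective _ hab)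
  have hc : (fun Y : Finset (Fin n) => ν ((Y.map (Fin.castAddEmb m)).card)) =
      fun Y : Finset (Fin n) => ν Y.card := by
    funext Y; rw [Finset.card_map]
  rwa [hc] at h

lemma mp_restR (n m : ℕ) :
    MeasurePreserving
      (fun (J : Finset (Fin (n+m)) → ℝ) (Y : Finset (Fin m)) => J (Y.map (Fin.natAddEmb n)))
      (Measure.pi fun X : Finset (Fin (n+m)) => ν X.card)
      (Measure.pi fun Y : Finset (Fin m) => ν Y.card) := by
  have h := measurePreserving_restrict (fun X : Finset (Fin (n+m)) => ν X.card)
    (fun Y : Finset (Fin m) => Y.map (Fin.natAddEmb n))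
    (fun a b hab => Finset.map_injective _ hab)
  have hc : (fun Y : Finset (Fin m) => ν ((Y.map (Fin.natAddEmb n)).card)) =
      fun Y : Finset (Fin m) => ν Y.card := by
    funext Y; rw [Finset.card_map]
  rwa [hc] at h

lemma superadd_nu (n m : ℕ)
    (hsupp : ∀ j, ν j (Set.Iio 0) = 0) (hν₀ : ν 0 = Measure.dirac 0)
    (hmean : ∀ j, Integrable id (ν j))
    (hGKS : ∀ (k : ℕ) (J : Finset (Fin k) → ℝ), (∀ X, 0 ≤ J X) →
      ∀ X : Finset (Fin k), 0 ≤ gibbs k (Ham k J 0 0 fun _ => 0) (spinProd X)) :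
    (∫ J : Finset (Fin n) → ℝ, Real.log (Zp n (Ham n J 0 0 fun _ => 0))
        ∂(Measure.pi fun X : Finset (Fin n) => ν X.card))
    + (∫ J : Finset (Fin m) → ℝ, Real.log (Zp m (Ham m J 0 0 fun _ => 0))
        ∂(Measure.pi fun X : Finset (Fin m) => ν X.card))
    ≤ ∫ J : Finset (Fin (n+m)) → ℝ, Real.log (Zp (n+m) (Ham (n+m) J 0 0 fun _ => 0))
        ∂(Measure.pi fun X : Finset (Fin (n+m)) => ν X.card) := by
  classical
  have intL : Integrable
      (fun J : Finset (Fin (n+m)) → ℝ =>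
        Real.log (Zp n (Ham n (fun Y => J (Y.map (Fin.castAddEmb m))) 0 0 fun _ => 0)))
      (Measure.pi fun X : Finset (Fin (n+m)) => ν X.card) :=
    ((mp_restL ν n m).integrable_comp (continuous_logZ n).aestronglyMeasurable).2
      (integrable_logZnu ν n hmean)
  have intR : Integrable
      (fun J : Finset (Fin (n+m)) → ℝ =>
        Real.log (Zp m (Ham m (fun Y => J (Y.map (Fin.natAddEmb n))) 0 0 fun _ => 0)))
      (Measure.pi fun X : Finset (Fin (n+m)) => ν X.card) :=
    ((mp_restR ν n m).integrable_comp (continuous_logZ m).aestronglyMeasurable).2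
      (integrable_logZnu ν m hmean)
  have intN := integrable_logZnu ν (n+m) hmean
  have hae : ∀ᵐ J : Finset (Fin (n+m)) → ℝ
      ∂(Measure.pi fun X : Finset (Fin (n+m)) => ν X.card),
      Real.log (Zp n (Ham n (fun Y => J (Y.map (Fin.castAddEmb m))) 0 0 fun _ => 0))
      + Real.log (Zp m (Ham m (fun Y => J (Y.map (Fin.natAddEmb n))) 0 0 fun _ => 0))
      ≤ Real.log (Zp (n+m) (Ham (n+m) J 0 0 fun _ => 0)) := by
    filter_upwards [ae_nonneg_nu ν (n+m) hsupp, ae_empty_nu ν (n+m) hν₀] with J hJ hJ0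
    set S : Finset (Finset (Fin (n+m))) := Finset.univ.filter
      (fun X : Finset (Fin (n+m)) => ¬(X ⊆ Finset.univ.map (Fin.castAddEmb m)
        ∨ X ⊆ Finset.univ.map (Fin.natAddEmb n))) with hS
    have hJe : (if (∅ : Finset (Fin (n+m))) ∈ S then 0 else J ∅) = 0 := by
      split <;> simp [hJ0]
    have hsupp' : ∀ X : Finset (Fin (n+m)),
        ¬(X ⊆ Finset.univ.map (Fin.castAddEmb m) ∨ X ⊆ Finset.univ.map (Fin.natAddEmb n)) →
        (if X ∈ S then 0 else J X) = 0 := by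
      intro X hX
      rw [if_pos (Finset.mem_filter.2 ⟨Finset.mem_univ X, hX⟩)]
    have hfac := Zp_factor n m (fun X => if X ∈ S then 0 else J X) hJe hsupp'
    have hrestL : (fun Y : Finset (Fin n) =>
        if (Y.map (Fin.castAddEmb m)) ∈ S then 0 else J (Y.map (Fin.castAddEmb m))) =
        fun Y => J (Y.map (Fin.castAddEmb m)) := by
      funext Y
      refine if_neg ?_
      rw [hS, Finset.mem_filter]
      push_neg
      intro _
      exact Or.inl (Finset.map_subset_map.2 (Finset.subset_univ Y))
    have hrestR : (fun Y : Finset (Fin m) =>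
        if (Y.map (Fin.natAddEmb n)) ∈ S then 0 else J (Y.map (Fin.natAddEmb n))) =
        fun Y => J (Y.map (Fin.natAddEmb n)) := by
      funext Y
      refine if_neg ?_
      rw [hS, Finset.mem_filter]
      push_neg
      intro _
      exact Or.inr (Finset.map_subset_map.2 (Finset.subset_univ Y))
    have hzero := logZ_zero_set_le (n+m) (hGKS (n+m)) J hJ S
    calc Real.log (Zp n (Ham n (fun Y => J (Y.map (Fin.castAddEmb m))) 0 0 fun _ => 0))
          + Real.log (Zp m (Ham m (fun Y => J (Y.map (Fin.natAddEmb n))) 0 0 fun _ => 0))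
        = Real.log (Zp (n+m) (Ham (n+m) (fun X => if X ∈ S then 0 else J X) 0 0 fun _ => 0)) := by
          rw [hfac, hrestL, hrestR,
            Real.log_mul (Zp_pos _ _).ne' (Zp_pos _ _).ne']
      _ ≤ _ := hzero
  have e1 : ∫ J : Finset (Fin (n+m)) → ℝ,
      Real.log (Zp n (Ham n (fun Y => J (Y.map (Fin.castAddEmb m))) 0 0 fun _ => 0))
      ∂(Measure.pi fun X : Finset (Fin (n+m)) => ν X.card)
      = ∫ J : Finset (Fin n) → ℝ, Real.log (Zp n (Ham n J 0 0 fun _ => 0))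
        ∂(Measure.pi fun X : Finset (Fin n) => ν X.card) :=
    integral_mp (mp_restL ν n m) _ (continuous_logZ n).aestronglyMeasurable
  have e2 : ∫ J : Finset (Fin (n+m)) → ℝ,
      Real.log (Zp m (Ham m (fun Y => J (Y.map (Fin.natAddEmb n))) 0 0 fun _ => 0))
      ∂(Measure.pi fun X : Finset (Fin (n+m)) => ν X.card)
      = ∫ J : Finset (Fin m) → ℝ, Real.log (Zp m (Ham m J 0 0 fun _ => 0))
        ∂(Measure.pi fun X : Finset (Fin m) => ν X.card) :=
    integral_mp (mp_restR ν n m) _ (continuous_logZ m).aestronglyMeasurable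
  rw [← e1, ← e2, ← integral_add intL intR]
  exact integral_mono_ae (intL.add intR) intN hae

end nu2

section nu3
variable (ν : ℕ → Measure ℝ) [∀ j, IsProbabilityMeasure (ν j)]

lemma sum_mean_eq (n xmax : ℕ) (hν₀ : ν 0 = Measure.dirac 0)
    (hνtail : ∀ j, xmax < j → ν j = Measure.dirac 0) :
    (∑ X : Finset (Fin n), ∫ x, x ∂(ν X.card)) =
      ∑ j ∈ Finset.Icc 1 xmax, (n.choose j : ℝ) * ∫ x, x ∂(ν j) := by
  have hmean0 : ∫ x, x ∂(ν 0) = 0 := by rw [hν₀, integral_dirac]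
  have hmeantail : ∀ j, xmax < j → (∫ x, x ∂(ν j)) = 0 := fun j hj => by
    rw [hνtail j hj, integral_dirac]
  have h1 : (∑ X : Finset (Fin n), ∫ x, x ∂(ν X.card)) =
      ∑ j ∈ Finset.range (n + 1), (n.choose j : ℝ) * ∫ x, x ∂(ν j) := by
    rw [show (Finset.univ : Finset (Finset (Fin n))) = (Finset.univ : Finset (Fin n)).powerset
      from Finset.powerset_univ.symm]
    rw [Finset.sum_powerset_apply_card (fun j => ∫ x, x ∂(ν j))]
    simp [Finset.card_univ, nsmul_eq_mul]
  rw [h1]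
  have h2 : ∑ j ∈ Finset.range (n + 1), (n.choose j : ℝ) * ∫ x, x ∂(ν j) =
      ∑ j ∈ Finset.range (n + xmax + 1), (n.choose j : ℝ) * ∫ x, x ∂(ν j) := by
    refine Finset.sum_subset (Finset.range_subset_range.2 (by omega)) fun j _ hj => ?_
    rw [Finset.mem_range, not_lt] at hj
    rw [Nat.choose_eq_zero_of_lt (by omega)]
    simp
  have h3 : ∑ j ∈ Finset.Icc 1 xmax, (n.choose j : ℝ) * ∫ x, x ∂(ν j) =
      ∑ j ∈ Finset.range (n + xmax + 1), (n.choose j : ℝ) * ∫ x, x ∂(ν j) := by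
    refine Finset.sum_subset (fun j hj => ?_) fun j _ hj => ?_
    · rw [Finset.mem_Icc] at hj
      rw [Finset.mem_range]
      omega
    · rw [Finset.mem_Icc, not_and_or] at hj
      rcases hj with hj | hj
      · have : j = 0 := by omega
        rw [this, hmean0, mul_zero]
      · rw [hmeantail j (by omega), mul_zero]
  rw [h2, h3]

lemma integral_logZ_le (n xmax : ℕ)
    (hsupp : ∀ j, ν j (Set.Iio 0) = 0) (hν₀ : ν 0 = Measure.dirac 0)
    (hνtail : ∀ j, xmax < j → ν j = Measure.dirac 0)
    (hmean : ∀ j, Integrable id (ν j)) :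
    (∫ J : Finset (Fin n) → ℝ, Real.log (Zp n (Ham n J 0 0 fun _ => 0))
      ∂(Measure.pi fun X : Finset (Fin n) => ν X.card)) ≤
      n * Real.log 2 + ∑ j ∈ Finset.Icc 1 xmax, (n.choose j : ℝ) * ∫ x, x ∂(ν j) := by
  have hg : Integrable
      (fun J : Finset (Fin n) → ℝ => (n : ℝ) * Real.log 2 + ∑ X : Finset (Fin n), |J X|)
      (Measure.pi fun X : Finset (Fin n) => ν X.card) := by
    refine (integrable_const _).add ?_
    refine integrable_finset_sum _ fun X _ => ?_
    exact integrable_evalR _ X (fun x => |x|) continuous_abs.aestronglyMeasurable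
      (hmean X.card).abs
  have hterm : ∀ X : Finset (Fin n), Integrable (fun J : Finset (Fin n) → ℝ => |J X|)
      (Measure.pi fun X : Finset (Fin n) => ν X.card) := fun X =>
    integrable_evalR _ X (fun x => |x|) continuous_abs.aestronglyMeasurable (hmean X.card).abs
  have hle := integral_mono (integrable_logZnu ν n hmean) hg
    (fun J => (abs_le.1 (abs_logZ_le n J)).2)
  refine hle.trans ?_
  rw [integral_add (integrable_const _) (integrable_finset_sum _ fun X _ => hterm X)]
  rw [integral_const]
  rw [integral_finset_sum _ fun X _ => hterm X]
  have : ∑ X : Finset (Fin n), ∫ J : Finset (Fin n) → ℝ, |J X|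
      ∂(Measure.pi fun X : Finset (Fin n) => ν X.card) =
      ∑ X : Finset (Fin n), ∫ x, x ∂(ν X.card) :=
    Finset.sum_congr rfl fun X _ => integral_absJ ν n X hsupp
  rw [this, sum_mean_eq ν n xmax hν₀ hνtail]
  simp

lemma integral_logZ_nonneg (n : ℕ) (hsupp : ∀ j, ν j (Set.Iio 0) = 0)
    (hmean : ∀ j, Integrable id (ν j)) :
    0 ≤ ∫ J : Finset (Fin n) → ℝ, Real.log (Zp n (Ham n J 0 0 fun _ => 0))
      ∂(Measure.pi fun X : Finset (Fin n) => ν X.card) := by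
  refine integral_nonneg_of_ae ?_
  filter_upwards [ae_nonneg_nu ν n hsupp] with J hJ
  exact logZ_nonneg n J hJ

end nu3

/-- Proposition B.2, existence of the thermodynamic limit: for
ferromagnetic models with independent couplings `J_X ~ μ_{|X|}` (supported on `[0,∞)`,
with finite means, and `J_X = 0` for `|X| > x_max` or `X = ∅`), if
`n⁻¹ ∑_j C(n,j) m(j) ≤ C` and the first GKS inequality holds, then the average
pressures `p_n` converge to a finite limit equal to `sup_n p_n`, at most `C + ln 2`. -/
theorem thermodynamic_limit_exists
    (xmax : ℕ) (hxmax : 1 ≤ xmax)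
    (ν : ℕ → Measure ℝ) [∀ j, IsProbabilityMeasure (ν j)]
    (hsupp : ∀ j, ν j (Set.Iio 0) = 0)
    (hmean : ∀ j, Integrable id (ν j))
    (hν₀ : ν 0 = Measure.dirac 0)
    (hνtail : ∀ j, xmax < j → ν j = Measure.dirac 0)
    (C : ℝ) (hC : 0 < C)
    (hmeanbound : ∀ n : ℕ, 1 ≤ n →
      (n : ℝ)⁻¹ * ∑ j ∈ Finset.Icc 1 xmax, (n.choose j : ℝ) * (∫ x, x ∂(ν j)) ≤ C)
    (hGKS1 : ∀ (n : ℕ) (J : Finset (Fin n) → ℝ), (∀ X, 0 ≤ J X) →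
      ∀ X : Finset (Fin n),
        0 ≤ gibbs n (Ham n J 0 0 fun _ => 0) (spinProd X))
    (p : ℕ → ℝ)
    (hp : ∀ n : ℕ, p n =
      ∫ J : Finset (Fin n) → ℝ,
          (n : ℝ)⁻¹ * Real.log (Zp n (Ham n J 0 0 fun _ => 0))
        ∂(Measure.pi fun X : Finset (Fin n) => ν X.card)) :
    ∃ L : ℝ,
      Filter.Tendsto p Filter.atTop (nhds L)
      ∧ L = ⨆ n : ℕ, p n
      ∧ L ≤ C + Real.log 2 := by
  classical
  set I : ℕ → ℝ := fun k => ∫ J : Finset (Fin k) → ℝ,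
      Real.log (Zp k (Ham k J 0 0 fun _ => 0))
      ∂(Measure.pi fun X : Finset (Fin k) => ν X.card) with hI
  have hpI : ∀ k : ℕ, p k = (k : ℝ)⁻¹ * I k := by
    intro k
    rw [hp k, MeasureTheory.integral_const_mul]
  have hp0 : p 0 = 0 := by rw [hpI 0]; simp
  have hlog2 : 0 < Real.log 2 := Real.log_pos (by norm_num)
  have hInonneg : ∀ k, 0 ≤ I k := fun k => integral_logZ_nonneg ν k hsupp hmean
  have hpnonneg : ∀ k, 0 ≤ p k := fun k => by
    rw [hpI k]
    exact mul_nonneg (by positivity) (hInonneg k)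
  have hIle : ∀ k : ℕ, 1 ≤ k → p k ≤ C + Real.log 2 := by
    intro k hk
    have hkpos : (0:ℝ) < k := by exact_mod_cast hk
    have h1 := integral_logZ_le ν k xmax hsupp hν₀ hνtail hmean
    rw [hpI k]
    have h2 : (k:ℝ)⁻¹ * I k ≤ (k:ℝ)⁻¹ *
        ((k : ℝ) * Real.log 2 + ∑ j ∈ Finset.Icc 1 xmax, (k.choose j : ℝ) * ∫ x, x ∂(ν j)) :=
      mul_le_mul_of_nonneg_left h1 (by positivity)
    refine h2.trans ?_
    rw [mul_add, ← mul_assoc, inv_mul_cancel₀ hkpos.ne', one_mul]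
    have h3 := hmeanbound k hk
    linarith
  have hpk_le : ∀ k, p k ≤ C + Real.log 2 := by
    intro k
    rcases Nat.eq_zero_or_pos k with rfl | hk
    · rw [hp0]; positivity
    · exact hIle k hk
  set u : ℕ → ℝ := fun k => -(I k) with hu
  have hsub : Subadditive u := by
    intro a b
    have h := superadd_nu ν a b hsupp hν₀ hmean hGKS1
    simp only [hu]
    linarith
  have hdiv : ∀ k : ℕ, u k / k = -(p k) := by
    intro k
    rcases Nat.eq_zero_or_pos k with rfl | hk
    · simp [hp0, hu]
    · have hkpos : (0:ℝ) < k := by exact_mod_cast hk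
      rw [hu, hpI k]
      field_simp
  have hbdd : BddBelow (Set.range fun k : ℕ => u k / k) := by
    refine ⟨-(C + Real.log 2), ?_⟩
    rintro x ⟨k, rfl⟩
    show -(C + Real.log 2) ≤ u k / k
    rw [hdiv k]
    exact neg_le_neg (hpk_le k)
  have htends := hsub.tendsto_lim hbdd
  have htendp : Filter.Tendsto p Filter.atTop (nhds (-hsub.lim)) := by
    have h := htends.neg
    refine h.congr fun k => ?_
    rw [hdiv k, neg_neg]
  have hle1 : ∀ k : ℕ, 1 ≤ k → p k ≤ -hsub.lim := by
    intro k hk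
    have h := hsub.lim_le_div hbdd (Nat.one_le_iff_ne_zero.1 hk)
    rw [hdiv k] at h
    linarith
  have hle : ∀ k, p k ≤ -hsub.lim := by
    intro k
    rcases Nat.eq_zero_or_pos k with rfl | hk
    · rw [hp0]
      exact le_trans (hpnonneg 1) (hle1 1 le_rfl)
    · exact hle1 k hk
  refine ⟨-hsub.lim, htendp, ?_, ?_⟩
  · have hbdda : BddAbove (Set.range p) := by
      refine ⟨C + Real.log 2, ?_⟩
      rintro x ⟨k, rfl⟩
      exact hpk_le k
    refine le_antisymm ?_ (ciSup_le hle)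
    exact le_of_tendsto htendp (Filter.Eventually.of_forall fun k => le_ciSup hbdda k)
  · exact le_of_tendsto htendp (Filter.Eventually.of_forall hpk_le)
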